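/- Any family of T functions from [n] to [k] such that every k-element subset of [n] admits an injective function in the family must satisfy T ≥ C(n,k)/(n/k)^k. -/

import Mathlib

open Finset

/-- Any family of T functions [n] → [k] such that every k-element subset of [n]
admits an injective member must satisfy T ≥ C(n,k)/(n/k)^k. -/
theorem stmt4 (n k T : ℕ) (hk : 1 ≤ k) (hkn : k ≤ n)
    (F : Fin T → Fin n → Fin k)
    (hF : ∀ A : Finset (Fin n), A.card = k → ∃ t : Fin T,
      Set.InjOn (F t) (A : Set (Fin n))) :
    (T : ℝ) ≥ (Nat.choose n k : ℝ) / ((n : ℝ) / (k : ℝ)) ^ k := by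
  have hn1 : 1 ≤ n := hk.trans hkn
  have hkR : (0:ℝ) < k := by exact_mod_cast hk
  have hnR : (0:ℝ) < n := by exact_mod_cast hn1
  set P := (univ : Finset (Fin n)).powersetCard k with hPdef
  have hPcard : P.card = n.choose k := by
    simp [hPdef, Finset.card_powersetCard]
  set S : Fin T → Finset (Finset (Fin n)) :=
    fun t => P.filter (fun A => Set.InjOn (F t) (A : Set (Fin n))) with hSdef
  have hsub : P ⊆ (univ : Finset (Fin T)).biUnion S := by
    intro A hA
    have hAk : A.card = k := (Finset.mem_powersetCard.mp hA).2
    obtain ⟨t, ht⟩ := hF A hAk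
    exact Finset.mem_biUnion.mpr ⟨t, mem_univ _, Finset.mem_filter.mpr ⟨hA, ht⟩⟩
  have h1 : (n.choose k : ℝ) ≤ ∑ t : Fin T, ((S t).card : ℝ) := by
    have := (Finset.card_le_card hsub).trans (Finset.card_biUnion_le)
    rw [hPcard] at this
    exact_mod_cast this
  have h2 : ∀ t : Fin T, ((S t).card : ℝ) ≤ ((n:ℝ)/(k:ℝ))^k := by
    intro t
    set fib : Fin k → Finset (Fin n) := fun i => univ.filter (fun x => F t x = i) with hfib
    -- step B : card (S t) ≤ ∏ i, (fib i).card
    have hB : (S t).card ≤ ∏ i : Fin k, (fib i).card := by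
      classical
      set g : Finset (Fin n) → (Fin k → Fin n) := fun A i =>
        if h : (A.filter (fun x => F t x = i)).Nonempty then h.choose else ⟨0, hn1⟩ with hg
      have key : ∀ A ∈ S t, ∀ i : Fin k, g A i ∈ A ∧ F t (g A i) = i := by
        intro A hA i
        obtain ⟨hAP, hinj⟩ := Finset.mem_filter.mp hA
        have hAk : A.card = k := (Finset.mem_powersetCard.mp hAP).2
        have himg : Finset.image (F t) A = univ := by
          apply Finset.eq_univ_of_card
          rw [Finset.card_image_of_injOn hinj, hAk, Fintype.card_fin]
        have hne : (A.filter (fun x => F t x = i)).Nonempty := by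
          have : i ∈ Finset.image (F t) A := by rw [himg]; exact mem_univ i
          obtain ⟨a, ha, hai⟩ := Finset.mem_image.mp this
          exact ⟨a, Finset.mem_filter.mpr ⟨ha, hai⟩⟩
        have := hne.choose_spec
        rw [Finset.mem_filter] at this
        simp only [hg, dif_pos hne]
        exact this
      have keyval : ∀ A ∈ S t, ∀ a ∈ A, g A (F t a) = a := by
        intro A hA a ha
        obtain ⟨hAP, hinj⟩ := Finset.mem_filter.mp hA
        obtain ⟨hmem, hval⟩ := key A hA (F t a)
        exact hinj hmem ha hval
      have hAeq : ∀ A ∈ S t, A = Finset.image (g A) univ := by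
        intro A hA
        apply Finset.Subset.antisymm
        · intro a ha
          exact Finset.mem_image.mpr ⟨F t a, mem_univ _, keyval A hA a ha⟩
        · intro x hx
          obtain ⟨i, _, hi⟩ := Finset.mem_image.mp hx
          rw [← hi]; exact (key A hA i).1
      calc (S t).card ≤ (Fintype.piFinset (fun i : Fin k => fib i)).card := by
            apply Finset.card_le_card_of_injOn g
            · intro A hA
              rw [Finset.mem_coe, Fintype.mem_piFinset]
              intro i
              rw [hfib]
              exact Finset.mem_filter.mpr ⟨mem_univ _, (key A hA i).2⟩
            · intro A hA B hB hgAB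
              rw [hAeq A hA, hAeq B hB, hgAB]
        _ = ∏ i : Fin k, (fib i).card := by rw [Fintype.card_piFinset]
    -- step C : AM-GM
    have hsum : ∑ i : Fin k, ((fib i).card : ℝ) = n := by
      have := Finset.card_eq_sum_card_fiberwise
        (f := F t) (s := (univ : Finset (Fin n))) (t := (univ : Finset (Fin k)))
        (fun x _ => mem_univ _)
      rw [Finset.card_univ, Fintype.card_fin] at this
      exact_mod_cast this.symm
    have hz : ∀ i ∈ (univ : Finset (Fin k)), (0:ℝ) ≤ ((fib i).card : ℝ) :=
      fun i _ => by positivity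
    have hw : ∀ i ∈ (univ : Finset (Fin k)), (0:ℝ) ≤ (1/(k:ℝ)) := fun i _ => by positivity
    have hw' : ∑ _i : Fin k, (1/(k:ℝ)) = 1 := by
      rw [Finset.sum_const, Finset.card_univ, Fintype.card_fin]
      rw [nsmul_eq_mul, mul_one_div_cancel (ne_of_gt hkR)]
    have hamgm := Real.geom_mean_le_arith_mean_weighted univ (fun _ => 1/(k:ℝ))
      (fun i => ((fib i).card : ℝ)) hw hw' hz
    have hrhs : ∑ i : Fin k, (1/(k:ℝ)) * ((fib i).card : ℝ) = (n:ℝ)/(k:ℝ) := by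
      rw [← Finset.mul_sum, hsum]; ring
    rw [hrhs] at hamgm
    have hpow : ∀ i : Fin k, (((fib i).card : ℝ) ^ (1/(k:ℝ)))^(k:ℕ) = ((fib i).card : ℝ) := by
      intro i
      rw [← Real.rpow_natCast (((fib i).card : ℝ) ^ (1/(k:ℝ))) k,
        ← Real.rpow_mul (by positivity), one_div, inv_mul_cancel₀ (ne_of_gt hkR),
        Real.rpow_one]
    calc ((S t).card : ℝ) ≤ ∏ i : Fin k, ((fib i).card : ℝ) := by exact_mod_cast hB
      _ = (∏ i : Fin k, ((fib i).card : ℝ) ^ (1/(k:ℝ)))^(k:ℕ) := by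
          rw [← Finset.prod_pow]
          exact Finset.prod_congr rfl (fun i _ => (hpow i).symm)
      _ ≤ ((n:ℝ)/(k:ℝ))^k := by
          apply pow_le_pow_left₀ _ hamgm
          exact Finset.prod_nonneg (fun i _ => Real.rpow_nonneg (by positivity) _)
  have h3 : (n.choose k : ℝ) ≤ T * ((n:ℝ)/(k:ℝ))^k := by
    calc (n.choose k : ℝ) ≤ ∑ t : Fin T, ((S t).card : ℝ) := h1
      _ ≤ ∑ _t : Fin T, ((n:ℝ)/(k:ℝ))^k := Finset.sum_le_sum (fun t _ => h2 t)
      _ = T * ((n:ℝ)/(k:ℝ))^k := by rw [Finset.sum_const, Finset.card_univ, Fintype.card_fin, nsmul_eq_mul]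
  rw [ge_iff_le, div_le_iff₀ (by positivity)]
  exact h3
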